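/- No block move decreases the number of descents of a permutation by more than two. That is, if p' is obtained from a permutation p of length n by interchanging two disjoint blocks of consecutive entries (keeping the order of entries within each block and the order of the blocks' surroundings), then des(p') ≥ des(p) - 2. -/

import Mathlib

/-- Number of descents of a list (one-line notation). -/
def desNum (p : List ℕ) : ℕ :=
  ((Finset.range (p.length - 1)).filter (fun i => p.getD (i+1) 0 < p.getD i 0)).card

/-- The extension of `p` by a leading `0` and trailing `n+1`. -/
def extList (p : List ℕ) : List ℕ := 0 :: (p ++ [p.length + 1])

/-- Number of bad pairs of `p`. -/
def badNum (p : List ℕ) : ℕ :=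
  ((Finset.range (p.length + 1)).filter
    (fun i => (extList p).getD i 0 + 1 ≠ (extList p).getD (i+1) 0)).card

/-- `q` is obtained from `p` by one block move: interchanging two disjoint
nonempty blocks of consecutive entries. -/
def IsBlockMove (p q : List ℕ) : Prop :=
  ∃ A X B Y C : List ℕ, X ≠ [] ∧ Y ≠ [] ∧
    p = A ++ X ++ B ++ Y ++ C ∧ q = A ++ Y ++ B ++ X ++ C

/-- `p` is a permutation of `{1,…,n}` in one-line notation. -/
def IsPermList (p : List ℕ) : Prop := p.Perm (List.range' 1 p.length)

/-- `p` can be sorted to the identity `1 2 … n` using at most `k` block moves. -/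
def SortableIn (p : List ℕ) (k : ℕ) : Prop :=
  ∃ m ≤ k, ∃ f : ℕ → List ℕ, f 0 = p ∧ f m = List.range' 1 p.length ∧
    ∀ i < m, IsBlockMove (f i) (f (i+1))

def desL : List ℕ → ℕ
  | a :: b :: t => (if b < a then 1 else 0) + desL (b :: t)
  | _ => 0

lemma desNum_eq : ∀ p : List ℕ, desNum p = desL p
  | [] => by simp [desNum, desL]
  | [a] => by simp [desNum, desL]
  | a :: b :: t => by
    have ih := desNum_eq (b :: t)
    simp only [desNum, desL, List.length_cons] at *
    rw [Finset.card_filter] at *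
    rw [show t.length + 1 + 1 - 1 = t.length + 1 from rfl, Finset.sum_range_succ']
    simp only [List.getD_cons_succ, List.getD_cons_zero]
    rw [show t.length + 1 - 1 = t.length from rfl] at ih
    simp only [List.getD_cons_succ] at ih
    omega

def bd (u v : List ℕ) : ℕ :=
  if u = [] ∨ v = [] then 0 else if v.headD 0 < u.getLastD 0 then 1 else 0

lemma desL_append : ∀ u v : List ℕ, desL (u ++ v) = desL u + desL v + bd u v
  | [], v => by simp [desL, bd]
  | [a], v => by cases v <;> simp [desL, bd] <;> omega
  | a :: b :: u, v => by
    have ih := desL_append (b :: u) v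
    simp only [List.cons_append, desL, bd] at *
    simp only [List.getLastD_cons, reduceCtorEq, false_or] at *
    rw [ih]; omega

lemma bd_right (u v w : List ℕ) (hv : v ≠ []) : bd u (v ++ w) = bd u v := by
  cases v with
  | nil => exact absurd rfl hv
  | cons b v' => simp [bd]

lemma bd_left (u v w : List ℕ) (hv : v ≠ []) : bd (u ++ v) w = bd v w := by
  have h1 : u ++ v ≠ [] := by simp [hv]
  have h2 : (u ++ v).getLastD 0 = v.getLastD 0 := by
    rw [List.getLastD_eq_getLast?, List.getLastD_eq_getLast?,
      List.getLast?_append_of_ne_nil _ hv]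
  unfold bd
  rw [h2]
  simp [h1, hv]

lemma key_cons (A X B Y C : List ℕ) (hX : X ≠ []) (hY : Y ≠ []) (hB : B ≠ []) :
    bd A X + bd X B + bd B Y + bd Y C ≤ bd A Y + bd Y B + bd B X + bd X C + 2 := by
  simp only [bd, hX, hY, hB, or_false, false_or]
  split_ifs <;> omega

lemma key_nil (A X Y C : List ℕ) (hX : X ≠ []) (hY : Y ≠ []) :
    bd A X + bd X Y + bd Y C ≤ bd A Y + bd Y X + bd X C + 2 := by
  simp only [bd, hX, hY, or_false, false_or]
  split_ifs <;> omega

lemma desL_decomp (A X B Y C : List ℕ) (hX : X ≠ []) (hY : Y ≠ []) :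
    desL (A ++ X ++ B ++ Y ++ C) =
      desL A + desL X + desL B + desL Y + desL C +
        (bd A X + bd X (B ++ (Y ++ C)) + bd B Y + bd Y C) := by
  simp only [List.append_assoc]
  rw [desL_append A, desL_append X, desL_append B, desL_append Y,
    bd_right A X _ hX, bd_right B Y _ hY]
  omega


/-- No block move decreases the number of descents by more than two. -/
theorem blockMove_descents (p q : List ℕ) (hp : IsPermList p)
    (h : IsBlockMove p q) : desNum p ≤ desNum q + 2 := by
  obtain ⟨A, X, B, Y, C, hX, hY, hpq, hq⟩ := h
  subst hpq; subst hq
  rw [desNum_eq, desNum_eq, desL_decomp A X B Y C hX hY, desL_decomp A Y B X C hY hX]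
  by_cases hB : B = []
  · subst hB
    simp only [List.nil_append]
    rw [bd_right X Y C hY, bd_right Y X C hX]
    have h0 : ∀ v : List ℕ, bd [] v = 0 := fun v => by simp [bd]
    have h0' : ∀ v : List ℕ, bd v [] = 0 := fun v => by simp [bd]
    rw [h0, h0]
    have h1 := key_nil A X Y C hX hY
    omega
  · rw [bd_right X B (Y ++ C) hB, bd_right Y B (X ++ C) hB]
    have h1 := key_cons A X B Y C hX hY hB
    omega
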